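/- Let Γ > 0 and κ ≥ Γ, let n be a positive integer, and let (e_n[k])_{k≥0} be independent real random variables where e_n[k] has probability density f_k. Define the CUSUM chain started at time k from state (z⁺, z⁻) ∈ [0, Γ]² by L⁺[k] = z⁺, L⁻[k] = z⁻ and, for j ≥ k, L⁺[j+1] = max(0, L⁺[j] + e_n[j] − κ), L⁻[j+1] = max(0, L⁻[j] − e_n[j] − κ). Let α = min{ j ≥ k : max(L⁺[j+1], L⁻[j+1]) > Γ } and g_{n,k}(z⁺, z⁻) = Pr(α > n). Then g_{n,k}(z⁺, z⁻) = ∫_{z⁻−κ−Γ}^{z⁻−κ} g_{n,k+1}(0, z⁻ − r − κ)·f_k(r) dr + g_{n,k+1}(0, 0)·Pr(e_n[k] ∈ [z⁻ − κ, κ − z⁺]) + ∫_{κ−z⁺}^{κ−z⁺+Γ} g_{n,k+1}(z⁺ + r − κ, 0)·f_k(r) dr. -/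

import Mathlib

open MeasureTheory ProbabilityTheory

/-- The CUSUM chain started at time `k` from state `z = (L⁺[k], L⁻[k])`:
`cusumChain κ e k z s` is the state `(L⁺[k+s], L⁻[k+s])`, where for `j ≥ k`
`L⁺[j+1] = max 0 (L⁺[j] + e j − κ)` and `L⁻[j+1] = max 0 (L⁻[j] − e j − κ)`. -/
def cusumChain (κ : ℝ) (e : ℕ → ℝ) (k : ℕ) (z : ℝ × ℝ) : ℕ → ℝ × ℝ
  | 0 => z
  | s + 1 =>
    (max 0 ((cusumChain κ e k z s).1 + e (k + s) - κ),
     max 0 ((cusumChain κ e k z s).2 - e (k + s) - κ))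

/-- `gProb P e κ Γ n k z` is the probability `Pr(α > n)` that the CUSUM chain
started at batch `k` in state `z` produces no detection through batch `n`,
where `α = min{j ≥ k : max(L⁺[j+1], L⁻[j+1]) > Γ}`. -/
noncomputable def gProb {Ω : Type*} [MeasurableSpace Ω] (P : Measure Ω)
    (e : ℕ → Ω → ℝ) (κ Γ : ℝ) (n k : ℕ) (z : ℝ × ℝ) : ℝ :=
  (P {ω | ∀ j, k ≤ j → j ≤ n →
      max (cusumChain κ (fun i => e i ω) k z (j + 1 - k)).1
          (cusumChain κ (fun i => e i ω) k z (j + 1 - k)).2 ≤ Γ}).toReal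

lemma cusumChain_shift (κ : ℝ) (e : ℕ → ℝ) (k : ℕ) (z : ℝ × ℝ) (s : ℕ) :
    cusumChain κ e k z (s + 1) =
      cusumChain κ e (k + 1) (max 0 (z.1 + e k - κ), max 0 (z.2 - e k - κ)) s := by
  induction s with
  | zero => rfl
  | succ s ih =>
      have hidx : k + (s + 1) = (k + 1) + s := by omega
      show (max 0 ((cusumChain κ e k z (s+1)).1 + e (k + (s+1)) - κ),
            max 0 ((cusumChain κ e k z (s+1)).2 - e (k + (s+1)) - κ)) = _
      rw [ih, hidx]
      rfl

lemma cusumChain_congr (κ : ℝ) (k : ℕ) (z : ℝ × ℝ) :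
    ∀ (s : ℕ) (e e' : ℕ → ℝ), (∀ i, k ≤ i → i < k + s → e i = e' i) →
      cusumChain κ e k z s = cusumChain κ e' k z s
  | 0, e, e', _ => rfl
  | s + 1, e, e', h => by
      have ih := cusumChain_congr κ k z s e e' (fun i h1 h2 => h i h1 (by omega))
      show (max 0 ((cusumChain κ e k z s).1 + e (k + s) - κ),
            max 0 ((cusumChain κ e k z s).2 - e (k + s) - κ)) = _
      rw [ih, h (k + s) (by omega) (by omega)]
      rfl

lemma cusumChain_measurable (κ : ℝ) (k : ℕ) :
    ∀ s : ℕ, Measurable (fun p : (ℝ × ℝ) × (ℕ → ℝ) => cusumChain κ p.2 k p.1 s)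
  | 0 => measurable_fst
  | s + 1 => by
      have ih := cusumChain_measurable κ k s
      have h1 : Measurable fun p : (ℝ × ℝ) × (ℕ → ℝ) => p.2 (k + s) :=
        (measurable_pi_apply (k + s)).comp measurable_snd
      exact (measurable_const.max (((measurable_fst.comp ih).add h1).sub measurable_const)).prod
        (measurable_const.max (((measurable_snd.comp ih).sub h1).sub measurable_const))

/-- Lemma 2: the no-detection probability of the CUSUM detector
satisfies the backward recursion
g_{n,k}(z⁺,z⁻) = ∫_{z⁻−κ−Γ}^{z⁻−κ} g_{n,k+1}(0, z⁻−r−κ)·f_k(r) dr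
  + g_{n,k+1}(0,0)·Pr(e_n[k] ∈ [z⁻−κ, κ−z⁺])
  + ∫_{κ−z⁺}^{κ−z⁺+Γ} g_{n,k+1}(z⁺+r−κ, 0)·f_k(r) dr. -/
theorem cusum_no_detection_recursion
    {Ω : Type*} [MeasurableSpace Ω] (P : Measure Ω) [IsProbabilityMeasure P]
    (Γ κ : ℝ) (hΓ : 0 < Γ) (hκ : Γ ≤ κ)
    (n : ℕ) (hn : 0 < n) (k : ℕ) (hk : k ≤ n)
    (e : ℕ → Ω → ℝ) (hmeas : ∀ i, Measurable (e i))
    (hindep : iIndepFun e P)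
    (f : ℕ → ℝ → ℝ) (hf_meas : ∀ i, Measurable (f i)) (hf_nonneg : ∀ i r, 0 ≤ f i r)
    (hdensity : ∀ i, Measure.map (e i) P =
      MeasureTheory.volume.withDensity (fun r => ENNReal.ofReal (f i r)))
    (zp zm : ℝ) (hzp : zp ∈ Set.Icc 0 Γ) (hzm : zm ∈ Set.Icc 0 Γ) :
    gProb P e κ Γ n k (zp, zm) =
      (∫ r in (zm - κ - Γ)..(zm - κ), gProb P e κ Γ n (k + 1) (0, zm - r - κ) * f k r) +
      gProb P e κ Γ n (k + 1) (0, 0) *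
        (P {ω | e k ω ∈ Set.Icc (zm - κ) (κ - zp)}).toReal +
      (∫ r in (κ - zp)..(κ - zp + Γ), gProb P e κ Γ n (k + 1) (zp + r - κ, 0) * f k r) := by
    classical
  obtain ⟨hzp0, hzpΓ⟩ := hzp
  obtain ⟨hzm0, hzmΓ⟩ := hzm
  set a := zm - κ - Γ with ha
  set b := zm - κ with hb
  set d := κ - zp + Γ with hd
  set c := κ - zp with hc
  have hab : a ≤ b := by rw [ha, hb]; linarith
  have hbc : b ≤ c := by rw [hb, hc]; linarith
  have hcd : c ≤ d := by rw [hc, hd]; linarith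
  set T : Finset ℕ := Finset.Icc (k + 1) n with hT
  set ext : (T → ℝ) → ℕ → ℝ := fun y i => if h : i ∈ T then y ⟨i, h⟩ else 0 with hextdef
  set Y : Ω → (T → ℝ) := fun ω i => e i ω with hYdef
  have hY : Measurable Y := measurable_pi_lambda _ fun i => hmeas i
  have hext : Measurable ext := by
    refine measurable_pi_lambda _ fun i => ?_
    by_cases h : i ∈ T
    · simpa [hextdef, h] using measurable_pi_apply (⟨i, h⟩ : {x // x ∈ T})
    · simpa [hextdef, h] using measurable_const
  -- independence of e k and Y
  have hXY : IndepFun (e k) Y P := by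
    have hdisj : Disjoint ({k} : Finset ℕ) T := by
      simp only [hT, Finset.disjoint_left, Finset.mem_singleton, Finset.mem_Icc]
      rintro i rfl; omega
    have h := hindep.indepFun_finset {k} T hdisj hmeas
    have h2 := h.comp (measurable_pi_apply (⟨k, by simp⟩ : {x // x ∈ ({k} : Finset ℕ)}))
      (measurable_id : Measurable (id : ({x // x ∈ T} → ℝ) → _))
    exact h2
  set μ : Measure ℝ := Measure.map (e k) P with hμ
  set ν : Measure ({x // x ∈ T} → ℝ) := Measure.map Y P with hν
  haveI hνprob : IsProbabilityMeasure ν := Measure.isProbabilityMeasure_map hY.aemeasurable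
  haveI hμprob : IsProbabilityMeasure μ := Measure.isProbabilityMeasure_map (hmeas k).aemeasurable
  set step : ℝ → ℝ × ℝ := fun r => (max 0 (zp + r - κ), max 0 (zm - r - κ)) with hstep
  have hstepm : Measurable step :=
    (measurable_const.max (measurable_id.const_add _ |>.sub measurable_const)).prod
      (measurable_const.max ((measurable_const.sub measurable_id).sub measurable_const))
  set tail : ℝ × ℝ → Set ({x // x ∈ T} → ℝ) := fun z => {y | ∀ j, k + 1 ≤ j → j ≤ n →
      max (cusumChain κ (ext y) (k+1) z (j + 1 - (k+1))).1
          (cusumChain κ (ext y) (k+1) z (j + 1 - (k+1))).2 ≤ Γ} with htail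
  -- measurability of big sets
  have hSetMeas : ∀ g : ℝ → ℝ × ℝ, Measurable g →
      MeasurableSet {p : ℝ × ({x // x ∈ T} → ℝ) | p.2 ∈ tail (g p.1)} := by
    intro g hg
    have : {p : ℝ × ({x // x ∈ T} → ℝ) | p.2 ∈ tail (g p.1)} =
        ⋂ (j : ℕ) (_ : k + 1 ≤ j) (_ : j ≤ n),
          {p : ℝ × ({x // x ∈ T} → ℝ) |
            max (cusumChain κ (ext p.2) (k+1) (g p.1) (j + 1 - (k+1))).1
                (cusumChain κ (ext p.2) (k+1) (g p.1) (j + 1 - (k+1))).2 ≤ Γ} := by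
      ext p; simp [htail]
    rw [this]
    refine MeasurableSet.iInter fun j => MeasurableSet.iInter fun _ =>
      MeasurableSet.iInter fun _ => ?_
    have hcm : Measurable fun p : ℝ × ({x // x ∈ T} → ℝ) =>
        cusumChain κ (ext p.2) (k+1) (g p.1) (j + 1 - (k+1)) :=
      (cusumChain_measurable κ (k+1) _).comp
        ((hg.comp measurable_fst).prodMk (hext.comp measurable_snd))
    exact measurableSet_le ((measurable_fst.comp hcm).max (measurable_snd.comp hcm))
      measurable_const
  have htailMeas : ∀ z : ℝ × ℝ, MeasurableSet (tail z) := by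
    intro z
    have := hSetMeas (fun _ => z) measurable_const
    exact measurable_prodMk_left (x := (0:ℝ)) this
  have hGmeas : ∀ g : ℝ → ℝ × ℝ, Measurable g → Measurable fun r => ν (tail (g r)) := by
    intro g hg
    exact measurable_measure_prodMk_left (hSetMeas g hg)
  -- ν (tail z) gives gProb at k+1
  have hch : ∀ (ω : Ω) (z : ℝ × ℝ) (j : ℕ), k + 1 ≤ j → j ≤ n →
      cusumChain κ (ext (Y ω)) (k+1) z (j + 1 - (k+1)) =
        cusumChain κ (fun i => e i ω) (k+1) z (j + 1 - (k+1)) := by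
    intro ω z j hj1 hj2
    apply cusumChain_congr
    intro i hi1 hi2
    have hiT : i ∈ T := by
      simp only [hT, Finset.mem_Icc]
      omega
    simp [hextdef, hiT, hYdef]
  have hνtail : ∀ z : ℝ × ℝ, (ν (tail z)).toReal = gProb P e κ Γ n (k+1) z := by
    intro z
    rw [hν, Measure.map_apply hY (htailMeas z), gProb]
    congr 1
    apply congrArg
    ext ω
    simp only [Set.mem_preimage, htail, Set.mem_setOf_eq]
    exact forall_congr' fun j => forall_congr' fun h1 => forall_congr' fun h2 => by
      rw [hch ω z j h1 h2]
  -- the global set S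
  set S : Set (ℝ × ({x // x ∈ T} → ℝ)) :=
    {p | max (step p.1).1 (step p.1).2 ≤ Γ ∧ p.2 ∈ tail (step p.1)} with hSdef
  have hSm : MeasurableSet S := by
    rw [hSdef]
    have h1 : MeasurableSet {p : ℝ × ({x // x ∈ T} → ℝ) | max (step p.1).1 (step p.1).2 ≤ Γ} :=
      measurableSet_le (((measurable_fst.comp hstepm).max (measurable_snd.comp hstepm)).comp
        measurable_fst) measurable_const
    exact h1.inter (hSetMeas step hstepm)
  -- the event equals the preimage of S under (e k, Y)
  have hE : {ω | ∀ j, k ≤ j → j ≤ n →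
      max (cusumChain κ (fun i => e i ω) k (zp, zm) (j + 1 - k)).1
          (cusumChain κ (fun i => e i ω) k (zp, zm) (j + 1 - k)).2 ≤ Γ}
      = (fun ω => (e k ω, Y ω)) ⁻¹' S := by
    ext ω
    simp only [Set.mem_setOf_eq, Set.mem_preimage, hSdef, htail]
    constructor
    · intro h
      refine ⟨?_, ?_⟩
      · have h0 := h k le_rfl hk
        have h1 : k + 1 - k = 1 := by omega
        rw [h1] at h0
        exact h0
      · intro j hj1 hj2
        have hj := h j (by omega) hj2
        have h2 : j + 1 - k = (j + 1 - (k + 1)) + 1 := by omega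
        rw [h2, cusumChain_shift] at hj
        rw [hch ω _ j hj1 hj2]
        exact hj
    · rintro ⟨h1, h2⟩ j hj1 hj2
      rcases eq_or_lt_of_le hj1 with rfl | hlt
      · have hidx : k + 1 - k = 1 := by omega
        rw [hidx]
        exact h1
      · have h2' := h2 j (by omega) hj2
        have hidx : j + 1 - k = (j + 1 - (k + 1)) + 1 := by omega
        rw [hidx, cusumChain_shift]
        rw [hch ω _ j (by omega) hj2] at h2'
        exact h2'
  have hPE : P ((fun ω => (e k ω, Y ω)) ⁻¹' S) = μ.prod ν S := by
    rw [hμ, hν,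
      ← (indepFun_iff_map_prod_eq_prod_map_map (hmeas k).aemeasurable hY.aemeasurable).mp hXY,
      Measure.map_apply ((hmeas k).prodMk hY) hSm]
  -- sections of S
  have hsect : ∀ r : ℝ, ν (Prod.mk r ⁻¹' S)
      = Set.indicator (Set.Icc a d) (fun r => ν (tail (step r))) r := by
    intro r
    by_cases hr : r ∈ Set.Icc a d
    · rw [Set.indicator_of_mem hr]
      obtain ⟨hr1, hr2⟩ := hr
      have hmax : max (step r).1 (step r).2 ≤ Γ :=
        max_le (max_le hΓ.le (by linarith [ha, hb, hc, hd]))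
               (max_le hΓ.le (by linarith [ha, hb, hc, hd]))
      have hPre : Prod.mk r ⁻¹' S = tail (step r) := by
        ext y
        simp only [hSdef, Set.mem_preimage, Set.mem_setOf_eq]
        exact ⟨fun h => h.2, fun h => ⟨hmax, h⟩⟩
      rw [hPre]
    · rw [Set.indicator_of_notMem hr]
      simp only [Set.mem_Icc, not_and_or, not_le] at hr
      have hmax : ¬ max (step r).1 (step r).2 ≤ Γ := by
        rcases hr with hr | hr
        · have h2 : Γ < (step r).2 :=
            lt_max_iff.mpr (Or.inr (by linarith [ha, hb, hc, hd]))
          exact not_le.mpr (lt_of_lt_of_le h2 (le_max_right _ _))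
        · have h2 : Γ < (step r).1 :=
            lt_max_iff.mpr (Or.inr (by linarith [ha, hb, hc, hd]))
          exact not_le.mpr (lt_of_lt_of_le h2 (le_max_left _ _))
      have hPre : Prod.mk r ⁻¹' S = ∅ := by
        ext y
        simp only [hSdef, Set.mem_preimage, Set.mem_setOf_eq, Set.mem_empty_iff_false,
          iff_false]
        rintro ⟨h1, -⟩
        exact hmax h1
      rw [hPre, measure_empty]
  have key : P {ω | ∀ j, k ≤ j → j ≤ n →
      max (cusumChain κ (fun i => e i ω) k (zp, zm) (j + 1 - k)).1
          (cusumChain κ (fun i => e i ω) k (zp, zm) (j + 1 - k)).2 ≤ Γ}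
      = ∫⁻ r in Set.Icc a d, ν (tail (step r)) ∂μ := by
    rw [hE, hPE, Measure.prod_apply hSm]
    simp_rw [hsect]
    rw [lintegral_indicator measurableSet_Icc]
  -- density facts
  have hμv : μ = (volume : Measure ℝ).withDensity (fun r => ENNReal.ofReal (f k r)) := by
    rw [hμ]; exact hdensity k
  have habs : μ ≪ (volume : Measure ℝ) := hμv ▸ withDensity_absolutelyContinuous _ _
  have hsingle : ∀ x : ℝ, μ {x} = 0 := fun x => habs (measure_singleton x)
  -- split the integral
  have hsplit : ∫⁻ r in Set.Icc a d, ν (tail (step r)) ∂μ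
      = (∫⁻ r in Set.Ioc a b, ν (tail (step r)) ∂μ)
      + (∫⁻ r in Set.Ioc b c, ν (tail (step r)) ∂μ)
      + (∫⁻ r in Set.Ioc c d, ν (tail (step r)) ∂μ) := by
    have hdisj : Disjoint (Set.Ioc a b) (Set.Ioc b c ∪ Set.Ioc c d) := by
      rw [Set.Ioc_union_Ioc_eq_Ioc hbc hcd]
      exact (Set.Ioc_disjoint_Ioc_of_le le_rfl)
    rw [setLIntegral_congr (MeasureTheory.Ioc_ae_eq_Icc' (hsingle a)).symm,
      ← Set.Ioc_union_Ioc_eq_Ioc hab (hbc.trans hcd),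
      ← Set.Ioc_union_Ioc_eq_Ioc hbc hcd,
      lintegral_union (measurableSet_Ioc.union measurableSet_Ioc) hdisj,
      lintegral_union measurableSet_Ioc (Set.Ioc_disjoint_Ioc_of_le le_rfl), ← add_assoc]
  -- step values on pieces
  have hstep1 : ∀ r ∈ Set.Ioc a b, step r = (0, zm - r - κ) := by
    intro r hr
    have h1 : zp + r - κ ≤ 0 := by linarith [ha, hb, hr.2]
    have h2 : 0 ≤ zm - r - κ := by linarith [hb, hr.2]
    rw [hstep]
    exact Prod.ext (max_eq_left h1) (max_eq_right h2)
  have hstep2 : ∀ r ∈ Set.Ioc b c, step r = ((0 : ℝ), (0 : ℝ)) := by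
    intro r hr
    have h1 : zp + r - κ ≤ 0 := by linarith [hb, hc, hr.2]
    have h2 : zm - r - κ ≤ 0 := by linarith [hb, hr.1.le]
    rw [hstep]
    exact Prod.ext (max_eq_left h1) (max_eq_left h2)
  have hstep3 : ∀ r ∈ Set.Ioc c d, step r = (zp + r - κ, 0) := by
    intro r hr
    have h1 : 0 ≤ zp + r - κ := by linarith [hc, hr.1.le]
    have h2 : zm - r - κ ≤ 0 := by linarith [hb, hc, hr.1.le]
    rw [hstep]
    exact Prod.ext (max_eq_right h1) (max_eq_left h2)
  -- conversion of lintegrals to interval integrals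
  have hconv : ∀ (u v : ℝ), u ≤ v → ∀ g : ℝ → ℝ × ℝ, Measurable g →
      (∫⁻ r in Set.Ioc u v, ν (tail (g r)) ∂μ).toReal
        = ∫ r in u..v, (ν (tail (g r))).toReal * f k r := by
    intro u v huv g hg
    rw [intervalIntegral.integral_of_le huv]
    have hgm : Measurable fun r => ν (tail (g r)) := hGmeas g hg
    rw [hμv, restrict_withDensity measurableSet_Ioc,
        lintegral_withDensity_eq_lintegral_mul _ ((hf_meas k).ennreal_ofReal) hgm]
    have hpt : ∀ r : ℝ, ((fun r => ENNReal.ofReal (f k r)) * fun r => ν (tail (g r))) r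
        = ENNReal.ofReal ((ν (tail (g r))).toReal * f k r) := by
      intro r
      simp only [Pi.mul_apply]
      rw [ENNReal.ofReal_mul ENNReal.toReal_nonneg,
        ENNReal.ofReal_toReal (measure_ne_top ν _), mul_comm]
    simp_rw [hpt]
    rw [← integral_eq_lintegral_of_nonneg_ae]
    · exact Filter.Eventually.of_forall fun r => mul_nonneg ENNReal.toReal_nonneg (hf_nonneg k r)
    · exact (hgm.ennreal_toReal.mul (hf_meas k)).aestronglyMeasurable
  -- the three pieces
  have hP1 : (∫⁻ r in Set.Ioc a b, ν (tail (step r)) ∂μ).toReal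
      = ∫ r in a..b, (ν (tail ((0 : ℝ), zm - r - κ))).toReal * f k r := by
    rw [setLIntegral_congr_fun_ae measurableSet_Ioc
      (Filter.Eventually.of_forall fun r hr => by rw [hstep1 r hr])]
    exact hconv a b hab (fun r => ((0 : ℝ), zm - r - κ))
      (measurable_const.prodMk ((measurable_const.sub measurable_id).sub measurable_const))
  have hP3 : (∫⁻ r in Set.Ioc c d, ν (tail (step r)) ∂μ).toReal
      = ∫ r in c..d, (ν (tail (zp + r - κ, (0 : ℝ)))).toReal * f k r := by
    rw [setLIntegral_congr_fun_ae measurableSet_Ioc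
      (Filter.Eventually.of_forall fun r hr => by rw [hstep3 r hr])]
    exact hconv c d hcd (fun r => (zp + r - κ, (0 : ℝ)))
      (((measurable_id.const_add _).sub measurable_const).prodMk measurable_const)
  have hmid : (∫⁻ r in Set.Ioc b c, ν (tail (step r)) ∂μ).toReal
      = (ν (tail ((0 : ℝ), (0 : ℝ)))).toReal * (P {ω | e k ω ∈ Set.Icc b c}).toReal := by
    rw [setLIntegral_congr_fun_ae measurableSet_Ioc
      (Filter.Eventually.of_forall fun r hr => by rw [hstep2 r hr]),
      setLIntegral_const, ENNReal.toReal_mul]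
    congr 1
    rw [measure_congr (MeasureTheory.Ioc_ae_eq_Icc' (hsingle b)), hμ,
      Measure.map_apply (hmeas k) measurableSet_Icc]
    rfl
  -- finiteness
  have hfin : ∀ (s : Set ℝ), (∫⁻ r in s, ν (tail (step r)) ∂μ) ≠ ⊤ := by
    intro s
    refine ne_top_of_le_ne_top (measure_ne_top μ s) ?_
    calc ∫⁻ r in s, ν (tail (step r)) ∂μ ≤ ∫⁻ _ in s, 1 ∂μ :=
          lintegral_mono fun r => prob_le_one
      _ = μ s := by rw [setLIntegral_const, one_mul]
  -- conclude
  simp only [← hνtail]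
  unfold gProb
  rw [key, hsplit,
    ENNReal.toReal_add (ENNReal.add_ne_top.mpr ⟨hfin _, hfin _⟩) (hfin _),
    ENNReal.toReal_add (hfin _) (hfin _), hP1, hmid, hP3]
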